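/- If f ∈ F_2[x_1,...,x_n] is invariant under the Borel subgroup B_n of upper-triangular matrices in GL_n(F_2) and f is divisible by x_k, then f is divisible by V_k = Π_{(λ_1,...,λ_{k-1}) ∈ F_2^{k-1}} (λ_1 x_1 + ... + λ_{k-1} x_{k-1} + x_k). -/

import Mathlib

open MvPolynomial

/-- The left action of matrices on `F₂[x₁,…,x_n]` by linear substitution. -/
noncomputable def matAct {n : ℕ} (σ : Matrix (Fin n) (Fin n) (ZMod 2))
    (f : MvPolynomial (Fin n) (ZMod 2)) : MvPolynomial (Fin n) (ZMod 2) :=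
  MvPolynomial.aeval (fun i => ∑ j, MvPolynomial.C (σ j i) * MvPolynomial.X j) f

/-- The linear form `λ₁x₁ + ⋯ + λ_{k-1}x_{k-1} + x_k`. -/
noncomputable def Lf {n : ℕ} (k : Fin n) (a : Fin (k : ℕ) → ZMod 2) :
    MvPolynomial (Fin n) (ZMod 2) :=
  (∑ j : Fin (k : ℕ), C (a j) * X (⟨(j : ℕ), j.2.trans k.2⟩ : Fin n)) + X k

/-- The substitution sending `x_k` to `Lf k a` and fixing the other variables. -/
noncomputable def gsub {n : ℕ} (k : Fin n) (a : Fin (k : ℕ) → ZMod 2) :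
    Fin n → MvPolynomial (Fin n) (ZMod 2) :=
  fun i => if i = k then Lf k a else X i

lemma mk_ne {n : ℕ} (k : Fin n) (j : Fin (k : ℕ)) :
    (⟨(j : ℕ), j.2.trans k.2⟩ : Fin n) ≠ k := by
  intro h
  have h1 : (j : ℕ) = (k : ℕ) := congrArg Fin.val h
  have h2 : (j : ℕ) < (k : ℕ) := j.2
  omega

lemma aeval_gsub_sum {n : ℕ} (k : Fin n) (a : Fin (k : ℕ) → ZMod 2) :
    aeval (gsub k a)
        (∑ j : Fin (k : ℕ), C (a j) * X (⟨(j : ℕ), j.2.trans k.2⟩ : Fin n)) =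
      ∑ j : Fin (k : ℕ), C (a j) * X (⟨(j : ℕ), j.2.trans k.2⟩ : Fin n) := by
  rw [map_sum]
  refine Finset.sum_congr rfl fun j _ => ?_
  rw [map_mul, aeval_C, aeval_X]
  simp [gsub, mk_ne k j, algebraMap_eq]

lemma aeval_gsub_Lf {n : ℕ} (k : Fin n) (a : Fin (k : ℕ) → ZMod 2) :
    aeval (gsub k a) (Lf k a) = X k := by
  rw [Lf, map_add, aeval_gsub_sum, aeval_X]
  have hg : gsub k a k = Lf k a := if_pos rfl
  rw [hg, Lf, ← add_assoc, CharTwo.add_self_eq_zero, zero_add]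

lemma aeval_gsub_gsub {n : ℕ} (k : Fin n) (a : Fin (k : ℕ) → ZMod 2) (i : Fin n) :
    aeval (gsub k a) (gsub k a i) = X i := by
  by_cases hik : i = k
  · subst hik
    rw [show gsub i a i = Lf i a from if_pos rfl]
    exact aeval_gsub_Lf i a
  · rw [show gsub k a i = X i from if_neg hik, aeval_X,
      show gsub k a i = X i from if_neg hik]

lemma gsub_invol {n : ℕ} (k : Fin n) (a : Fin (k : ℕ) → ZMod 2) :
    (aeval (gsub k a)).comp (aeval (gsub k a)) =
      AlgHom.id (ZMod 2) (MvPolynomial (Fin n) (ZMod 2)) := by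
  apply MvPolynomial.algHom_ext
  intro i
  simp only [AlgHom.comp_apply, aeval_X, AlgHom.id_apply]
  exact aeval_gsub_gsub k a i

/-- The substitution as an algebra automorphism (it is an involution in characteristic 2). -/
noncomputable def gequiv {n : ℕ} (k : Fin n) (a : Fin (k : ℕ) → ZMod 2) :
    MvPolynomial (Fin n) (ZMod 2) ≃ₐ[ZMod 2] MvPolynomial (Fin n) (ZMod 2) :=
  AlgEquiv.ofAlgHom (aeval (gsub k a)) (aeval (gsub k a)) (gsub_invol k a) (gsub_invol k a)

lemma mv_isUnit_eq_one : ∀ (n : ℕ) (p : MvPolynomial (Fin n) (ZMod 2)), IsUnit p → p = 1 := by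
  intro n
  induction n with
  | zero =>
    intro p hp
    have e := MvPolynomial.isEmptyAlgEquiv (ZMod 2) (Fin 0)
    have h1 : IsUnit (e p) := hp.map e
    have h2 : e p = 1 := by
      have hz : ∀ x : ZMod 2, x ≠ 0 → x = 1 := by decide
      exact hz _ h1.ne_zero
    have := congrArg e.symm h2
    simpa using this
  | succ m ih =>
    intro p hp
    have e := MvPolynomial.finSuccEquiv (ZMod 2) m
    have h1 : IsUnit (e p) := hp.map e
    obtain ⟨r, hr, hrp⟩ := Polynomial.isUnit_iff.mp h1
    have hr1 : r = 1 := ih r hr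
    have h2 : e p = 1 := by rw [← hrp, hr1, map_one]
    have := congrArg e.symm h2
    simpa using this

instance mv_units_subsingleton (n : ℕ) : Subsingleton (MvPolynomial (Fin n) (ZMod 2))ˣ :=
  ⟨fun u v => Units.ext (by
    rw [mv_isUnit_eq_one n u.val u.isUnit, mv_isUnit_eq_one n v.val v.isUnit])⟩

lemma prime_X_mv {n : ℕ} (i : Fin n) : Prime (X i : MvPolynomial (Fin n) (ZMod 2)) := by
  have hpos : 0 < n := i.pos
  obtain ⟨m, rfl⟩ : ∃ m, n = m + 1 := ⟨n - 1, by omega⟩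
  have h0 : Prime (X (0 : Fin (m + 1)) : MvPolynomial (Fin (m + 1)) (ZMod 2)) := by
    rw [← MulEquiv.prime_iff (MvPolynomial.finSuccEquiv (ZMod 2) m).toMulEquiv]
    have hX : (MvPolynomial.finSuccEquiv (ZMod 2) m).toMulEquiv (X 0) = Polynomial.X := by
      show (MvPolynomial.finSuccEquiv (ZMod 2) m) (X 0) = Polynomial.X
      exact MvPolynomial.finSuccEquiv_X_zero
    rw [hX]
    exact Polynomial.prime_X
  have h1 := (MulEquiv.prime_iff (renameEquiv (ZMod 2) (Equiv.swap (0 : Fin (m + 1)) i)).toMulEquiv).mpr h0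
  have h2 : (renameEquiv (ZMod 2) (Equiv.swap (0 : Fin (m + 1)) i)).toMulEquiv
      (X (0 : Fin (m + 1))) = X i := by
    show (renameEquiv (ZMod 2) (Equiv.swap (0 : Fin (m + 1)) i))
        (X (0 : Fin (m + 1))) = X i
    rw [renameEquiv_apply, rename_X, Equiv.swap_apply_left]
  rwa [h2] at h1

lemma prime_Lf {n : ℕ} (k : Fin n) (a : Fin (k : ℕ) → ZMod 2) : Prime (Lf k a) := by
  have h1 := (MulEquiv.prime_iff (gequiv k a).toMulEquiv).mpr (prime_X_mv k)
  have h2 : (gequiv k a).toMulEquiv (X k) = Lf k a := by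
    show aeval (gsub k a) (X k) = Lf k a
    rw [aeval_X]
    exact if_pos rfl
  rwa [h2] at h1

lemma Lf_inj {n : ℕ} (k : Fin n) : Function.Injective (Lf k) := by
  intro a b hab
  funext j
  have hc := congrArg (coeff (Finsupp.single (⟨(j : ℕ), j.2.trans k.2⟩ : Fin n) 1)) hab
  have hkj : ¬ (Finsupp.single (k : Fin n) 1 =
      Finsupp.single (⟨(j : ℕ), j.2.trans k.2⟩ : Fin n) (1 : ℕ)) := by
    intro h
    have hk : k = (⟨(j : ℕ), j.2.trans k.2⟩ : Fin n) :=
      (Finsupp.single_left_inj one_ne_zero).mp h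
    exact (mk_ne k j) hk.symm
  have hsingle : ∀ l : Fin (k : ℕ),
      (Finsupp.single (⟨(l : ℕ), l.2.trans k.2⟩ : Fin n) (1 : ℕ) =
        Finsupp.single (⟨(j : ℕ), j.2.trans k.2⟩ : Fin n) 1) ↔ l = j := by
    intro l
    rw [Finsupp.single_left_inj one_ne_zero]
    constructor
    · intro h
      exact Fin.ext (by simpa [Fin.ext_iff] using h)
    · intro h; subst h; rfl
  simp only [Lf, coeff_add, coeff_sum, coeff_C_mul, coeff_X', hkj, if_false, add_zero] at hc
  simpa [hsingle] using hc

lemma Lf_dvd {n : ℕ} (f : MvPolynomial (Fin n) (ZMod 2))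
    (hinv : ∀ σ : Matrix (Fin n) (Fin n) (ZMod 2),
      (∀ i j : Fin n, j < i → σ i j = 0) → (∀ i : Fin n, σ i i = 1) → matAct σ f = f)
    (k : Fin n) (hdvd : (X k : MvPolynomial (Fin n) (ZMod 2)) ∣ f)
    (a : Fin (k : ℕ) → ZMod 2) : Lf k a ∣ f := by
  classical
  set σ : Matrix (Fin n) (Fin n) (ZMod 2) := fun i j =>
    if i = j then 1 else if j = k then (if h : (i : ℕ) < (k : ℕ) then a ⟨i, h⟩ else 0) else 0
    with hσ
  have hlow : ∀ i j : Fin n, j < i → σ i j = 0 := by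
    intro i j hji
    have hij : i ≠ j := fun h => absurd (h ▸ hji) (lt_irrefl _)
    by_cases hjk : j = k
    · subst hjk
      have hnk : ¬ (i : ℕ) < (j : ℕ) := not_lt_of_gt hji
      show (if i = j then (1 : ZMod 2) else if j = j then
        (if h : (i : ℕ) < (j : ℕ) then a ⟨i, h⟩ else 0) else 0) = 0
      rw [if_neg hij, if_pos rfl, dif_neg hnk]
    · show (if i = j then (1 : ZMod 2) else if j = k then
        (if h : (i : ℕ) < (k : ℕ) then a ⟨i, h⟩ else 0) else 0) = 0
      rw [if_neg hij, if_neg hjk]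
  have hdiag : ∀ i : Fin n, σ i i = 1 := by intro i; simp [hσ]
  have hfun : (fun i => ∑ j, C (σ j i) * X j) = gsub k a := by
    funext i
    by_cases hik : i = k
    · subst hik
      have hterm : ∀ j : Fin n, C (σ j i) * X j =
          (if j = i then X j else 0) +
            C (if h : (j : ℕ) < (i : ℕ) then a ⟨j, h⟩ else 0) * X j := by
        intro j
        by_cases hji : j = i
        · subst hji
          have hnlt : ¬ (j : ℕ) < (j : ℕ) := lt_irrefl _
          simp [hσ, hnlt]
        · simp [hσ, hji]
      rw [Finset.sum_congr rfl fun j _ => hterm j, Finset.sum_add_distrib,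
        Finset.sum_ite_eq' Finset.univ i (fun j => X j)]
      simp only [Finset.mem_univ, if_true]
      have hemb :
          (∑ j : Fin n, C (if h : (j : ℕ) < (i : ℕ) then a ⟨j, h⟩ else 0) * X j)
            = ∑ l : Fin (i : ℕ), C (a l) * X (⟨(l : ℕ), l.2.trans i.2⟩ : Fin n) := by
        set emb : Fin (i : ℕ) ↪ Fin n :=
          ⟨fun l => ⟨(l : ℕ), l.2.trans i.2⟩, fun x y h => Fin.ext (by
            simpa [Fin.ext_iff] using h)⟩ with hembdef
        rw [← Finset.sum_subset (Finset.subset_univ (Finset.univ.map emb))]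
        · rw [Finset.sum_map]
          refine Finset.sum_congr rfl fun l _ => ?_
          show C (if h : ((emb l : Fin n) : ℕ) < (i : ℕ) then a ⟨(emb l : Fin n), h⟩ else 0)
              * X (emb l) = _
          have : ((emb l : Fin n) : ℕ) = (l : ℕ) := rfl
          simp only [hembdef, Function.Embedding.coeFn_mk]
          show C (if h : (l : ℕ) < (i : ℕ) then a ⟨l, h⟩ else 0) * X (⟨(l : ℕ), l.2.trans i.2⟩ : Fin n) = _
          rw [dif_pos l.2]
        · intro j _ hj
          have hjlt : ¬ (j : ℕ) < (i : ℕ) := by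
            intro h
            refine hj ?_
            rw [Finset.mem_map]
            exact ⟨⟨(j : ℕ), h⟩, Finset.mem_univ _, by
              rfl⟩
          rw [dif_neg hjlt]
          simp
      rw [hemb]
      show X i + _ = gsub i a i
      rw [show gsub i a i = Lf i a from if_pos rfl, Lf, add_comm]
    · have hterm : ∀ j : Fin n, C (σ j i) * X j = if j = i then X j else 0 := by
        intro j
        by_cases hji : j = i
        · subst hji; simp [hσ]
        · simp [hσ, hji, hik]
      rw [Finset.sum_congr rfl fun j _ => hterm j,
        Finset.sum_ite_eq' Finset.univ i (fun j => X j)]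
      simp only [Finset.mem_univ, if_true]
      exact (if_neg hik).symm
  obtain ⟨g, rfl⟩ := hdvd
  have hfix := hinv σ hlow hdiag
  rw [matAct, hfun] at hfix
  refine ⟨aeval (gsub k a) g, ?_⟩
  rw [← hfix, map_mul]
  congr 1
  rw [aeval_X]
  simp [gsub]

/-- Mùi's observation: if `f ∈ F₂[x₁,…,x_n]` is invariant under the Borel subgroup `B_n`
of upper-triangular invertible matrices and `x_k ∣ f`, then
`V_k = Π_{(λ_1,…,λ_{k-1}) ∈ F₂^{k-1}} (λ_1 x_1 + ⋯ + λ_{k-1} x_{k-1} + x_k)` divides `f`. -/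
theorem stmt11 (n : ℕ) (f : MvPolynomial (Fin n) (ZMod 2))
    (hinv : ∀ σ : Matrix (Fin n) (Fin n) (ZMod 2),
      (∀ i j : Fin n, j < i → σ i j = 0) → (∀ i : Fin n, σ i i = 1) → matAct σ f = f)
    (k : Fin n) (hdvd : (X k : MvPolynomial (Fin n) (ZMod 2)) ∣ f) :
    (∏ a : Fin (k : ℕ) → ZMod 2,
      ((∑ j : Fin (k : ℕ), C (a j) * X (⟨(j : ℕ), j.2.trans k.2⟩ : Fin n)) + X k)) ∣ f := by
  classical
  have himg : ∏ p ∈ Finset.univ.image (Lf k), p = ∏ a : Fin (k : ℕ) → ZMod 2, Lf k a :=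
    Finset.prod_image (fun x _ y _ h => Lf_inj k h)
  have h1 : (∏ a : Fin (k : ℕ) → ZMod 2, Lf k a) ∣ f := by
    rw [← himg]
    refine Finset.prod_primes_dvd f ?_ ?_
    · intro p hp
      obtain ⟨a, _, rfl⟩ := Finset.mem_image.mp hp
      exact prime_Lf k a
    · intro p hp
      obtain ⟨a, _, rfl⟩ := Finset.mem_image.mp hp
      exact Lf_dvd f hinv k hdvd a
  exact h1
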